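/- In the ring ℚ[[X]] of formal power series, let U be the unique power series with constant term 0 satisfying U = X·(1 + U²), and let M = Σ_{n≥0} m_n Xⁿ where m_n is the number of Dyck meanders with catastrophes of length n. Then M·(X² + (X² + X − 1)·U) = X·(U − 1). -/

import Mathlib

open PowerSeries

/-- Validity of a path with catastrophes over the jump set `J`, starting from
altitude `h`: each step is either a jump `s ∈ J` keeping the altitude
nonnegative, or a catastrophe `s = -h` from an altitude `h > 0` with `-h ∉ J`
(landing at altitude `0`). -/
def CatValidFrom (J : Finset ℤ) : ℤ → List ℤ → Prop
  | _, [] => True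
  | h, s :: r =>
    ((s ∈ J ∧ 0 ≤ h + s) ∨ (s = -h ∧ 0 < h ∧ -h ∉ J)) ∧ CatValidFrom J (h + s) r

/-- The jump set of Dyck paths. For this jump set a catastrophe is a jump
`-h` from an altitude `h ≥ 2` to altitude `0`. -/
def dyckJ : Finset ℤ := {-1, 1}

/-- `l` is a Dyck meander with catastrophes of length `n` (endpoint at any
altitude). -/
def DyckCatMeander (n : ℕ) (l : List ℤ) : Prop :=
  l.length = n ∧ CatValidFrom dyckJ 0 l

/-- The number `m n` of Dyck meanders with catastrophes of length `n`. -/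
noncomputable def mCount (n : ℕ) : ℕ := Nat.card {l : List ℤ // DyckCatMeander n l}

/-- The generating function `M = ∑ m_n Xⁿ` of Dyck meanders with catastrophes. -/
noncomputable def M : PowerSeries ℚ := PowerSeries.mk fun n => (mCount n : ℚ)

def steps (h : ℤ) : Finset ℤ := if h = 0 then {1} else if h = 1 then {-1, 1} else {-1, 1, -h}

def paths : ℕ → ℤ → Finset (List ℤ)
  | 0, _ => {[]}
  | n+1, h => (steps h).biUnion fun s => (paths n (h+s)).image (List.cons s)

lemma mem_steps {h s : ℤ} (hh : 0 ≤ h) :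
    s ∈ steps h ↔ ((s ∈ dyckJ ∧ 0 ≤ h + s) ∨ (s = -h ∧ 0 < h ∧ -h ∉ dyckJ)) := by
  unfold steps dyckJ
  split_ifs with h0 h1 <;> simp_all <;> omega

lemma mem_paths : ∀ (n : ℕ) (h : ℤ), 0 ≤ h → ∀ l : List ℤ,
    (l ∈ paths n h ↔ l.length = n ∧ CatValidFrom dyckJ h l)
  | 0, h, hh, l => by
      simp only [paths, Finset.mem_singleton]
      constructor
      · rintro rfl; exact ⟨rfl, trivial⟩
      · rintro ⟨hl, -⟩; exact List.length_eq_zero_iff.mp hl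
  | n+1, h, hh, l => by
      simp only [paths, Finset.mem_biUnion, Finset.mem_image]
      constructor
      · rintro ⟨s, hs, t, ht, rfl⟩
        have hs' := (mem_steps hh).mp hs
        have hhs : 0 ≤ h + s := by
          rcases hs' with ⟨-, h2⟩ | ⟨rfl, -⟩
          · exact h2
          · omega
        have := (mem_paths n (h+s) hhs t).mp ht
        exact ⟨by simp [this.1], hs', this.2⟩
      · rintro ⟨hl, hv⟩
        cases l with
        | nil => simp at hl
        | cons s t =>
          obtain ⟨hs', hv'⟩ := hv
          have hhs : 0 ≤ h + s := by
            rcases hs' with ⟨-, h2⟩ | ⟨rfl, -⟩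
            · exact h2
            · omega
          refine ⟨s, (mem_steps hh).mpr hs', t, (mem_paths n (h+s) hhs t).mpr ⟨by simpa using hl, hv'⟩, rfl⟩

lemma card_paths_succ (n : ℕ) (h : ℤ) :
    (paths (n+1) h).card = ∑ s ∈ steps h, (paths n (h+s)).card := by
  rw [show paths (n+1) h = (steps h).biUnion fun s => (paths n (h+s)).image (List.cons s) from rfl,
    Finset.card_biUnion]
  · refine Finset.sum_congr rfl fun s _ => ?_
    exact Finset.card_image_of_injective _ (List.cons_injective)
  · intro a _ b _ hab
    simp only [Finset.disjoint_left, Finset.mem_image]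
    rintro l ⟨t, -, rfl⟩ ⟨t', -, h'⟩
    exact hab (by injection h' with h1 h2; exact h1.symm)

def c : ℕ → ℕ → ℕ
  | 0, _ => 1
  | n+1, 0 => c n 1
  | n+1, 1 => c n 2 + c n 0
  | n+1, (h+2) => c n (h+3) + c n (h+1) + c n 0

lemma card_paths : ∀ (n : ℕ) (h : ℕ), (paths n (h : ℤ)).card = c n h
  | 0, h => rfl
  | n+1, 0 => by
      rw [card_paths_succ]
      show ∑ s ∈ steps 0, _ = c n 1
      rw [show steps 0 = {1} from rfl]
      simpa using card_paths n 1
  | n+1, 1 => by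
      rw [card_paths_succ]
      show ∑ s ∈ steps 1, _ = _
      rw [show steps 1 = {-1, 1} from rfl, Finset.sum_insert (by decide), Finset.sum_singleton]
      show (paths n ((1:ℤ)+(-1))).card + (paths n ((1:ℤ)+1)).card = c n 2 + c n 0
      rw [show ((1:ℤ)+(-1)) = ((0:ℕ):ℤ) by norm_num, show ((1:ℤ)+1) = ((2:ℕ):ℤ) by norm_num,
        card_paths n 0, card_paths n 2]
      exact Nat.add_comm _ _
  | n+1, (h+2) => by
      rw [card_paths_succ]
      have hs : steps ((h:ℤ)+2) = {-1, 1, -((h:ℤ)+2)} := by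
        unfold steps; rw [if_neg (by omega), if_neg (by omega)]
      push_cast
      rw [hs, Finset.sum_insert (by simp; omega), Finset.sum_insert (by simp; omega),
        Finset.sum_singleton]
      rw [show ((h:ℤ)+2+(-1)) = ((h+1:ℕ):ℤ) by push_cast; ring,
        show ((h:ℤ)+2+1) = ((h+3:ℕ):ℤ) by push_cast; ring,
        show ((h:ℤ)+2+(-((h:ℤ)+2))) = ((0:ℕ):ℤ) by push_cast; ring,
        card_paths n (h+1), card_paths n (h+3), card_paths n 0]
      show _ = c n (h+3) + c n (h+1) + c n 0
      omega

lemma mCount_eq (n : ℕ) : mCount n = c n 0 := by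
  have he : ∀ l : List ℤ, DyckCatMeander n l ↔ l ∈ paths n 0 := by
    intro l
    rw [mem_paths n 0 le_rfl l]
    rfl
  rw [mCount, Nat.card_congr (Equiv.subtypeEquivRight he), Nat.card_eq_finsetCard,
    show ((0:ℤ)) = ((0:ℕ):ℤ) by norm_num, card_paths n 0]
noncomputable def Cgf (h : ℕ) : PowerSeries ℚ := PowerSeries.mk fun n => (c n h : ℚ)

lemma E0 : Cgf 0 = 1 + X * Cgf 1 := by
  ext n
  cases n with
  | zero => simp [Cgf, coeff_zero_X_mul, PowerSeries.coeff_one]; rfl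
  | succ n =>
      simp [Cgf, coeff_succ_X_mul, PowerSeries.coeff_one]
      rfl

lemma E1 : Cgf 1 = 1 + X * (Cgf 2 + Cgf 0) := by
  ext n
  cases n with
  | zero => simp [Cgf, coeff_zero_X_mul, PowerSeries.coeff_one]; rfl
  | succ n =>
      rw [show X * (Cgf 2 + Cgf 0) = X * Cgf 2 + X * Cgf 0 by ring]
      simp [Cgf, coeff_succ_X_mul, PowerSeries.coeff_one]
      show ((c (n+1) 1 : ℚ)) = _
      rw [show c (n+1) 1 = c n 2 + c n 0 from rfl]
      push_cast; ring

lemma Eh (k : ℕ) : Cgf (k+2) = 1 + X * (Cgf (k+3) + Cgf (k+1) + Cgf 0) := by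
  ext n
  cases n with
  | zero => simp [Cgf, coeff_zero_X_mul, PowerSeries.coeff_one]; rfl
  | succ n =>
      rw [show X * (Cgf (k+3) + Cgf (k+1) + Cgf 0)
          = X * Cgf (k+3) + X * Cgf (k+1) + X * Cgf 0 by ring]
      simp [Cgf, coeff_succ_X_mul, PowerSeries.coeff_one]
      show ((c (n+1) (k+2) : ℚ)) = _
      rw [show c (n+1) (k+2) = c n (k+3) + c n (k+1) + c n 0 from rfl]
      push_cast; ring

noncomputable def Q (U : PowerSeries ℚ) (h : ℕ) : PowerSeries ℚ :=
  Cgf h * (1 - 2*X - X^2 + X^2*U) - (1+X)*(1 - U^h)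

lemma R1 (U : PowerSeries ℚ) (hU : U = X * (1 + U ^ 2)) :
    Q U 1 = X * Q U 2 + X^2 * Q U 1 := by
  unfold Q
  linear_combination (1 - 2*X - X^2 + X^2*U) * E1 + X*(1 - 2*X - X^2 + X^2*U) * E0
    + ((1:PowerSeries ℚ)+X) * hU

lemma Rh (U : PowerSeries ℚ) (hU : U = X * (1 + U ^ 2)) (k : ℕ) :
    Q U (k+2) = X * (Q U (k+3) + Q U (k+1)) + X^2 * Q U 1 := by
  unfold Q
  linear_combination (1 - 2*X - X^2 + X^2*U) * Eh k + X*(1 - 2*X - X^2 + X^2*U) * E0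
    + ((1:PowerSeries ℚ)+X) * U^(k+1) * hU

lemma Qzero (U : PowerSeries ℚ) (hU0 : constantCoeff U = 0)
    (hU : U = X * (1 + U ^ 2)) (h : ℕ) : Q U (h+1) = 0 := by
  have key : ∀ n : ℕ, ∀ h : ℕ, (coeff n) (Q U (h+1)) = 0 := by
    intro n
    induction n using Nat.strong_induction_on with
    | _ n ih =>
      intro h
      cases n with
      | zero =>
          have h1 : constantCoeff (Cgf (h+1)) = 1 := by
            show (c 0 (h+1) : ℚ) = 1; rfl
          simp [Q, ← coeff_zero_eq_constantCoeff, coeff_zero_eq_constantCoeff, map_sub, map_mul,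
            map_add, map_pow, hU0, h1]
      | succ n =>
          have hXQ : ∀ j m : ℕ, m < n + 1 → (coeff m) (X * Q U (j+1)) = 0 := by
            intro j m hm
            cases m with
            | zero => simp [coeff_zero_X_mul]
            | succ m => rw [coeff_succ_X_mul]; exact ih m (by omega) j
          cases h with
          | zero =>
              rw [R1 U hU, map_add, coeff_succ_X_mul, ih n (by omega) 1,
                show (X:PowerSeries ℚ)^2 * Q U 1 = X * (X * Q U 1) by ring,
                coeff_succ_X_mul, hXQ 0 n (by omega)]
              ring
          | succ h =>
              rw [Rh U hU h, map_add, coeff_succ_X_mul, map_add, ih n (by omega) (h+2),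
                ih n (by omega) h,
                show (X:PowerSeries ℚ)^2 * Q U 1 = X * (X * Q U 1) by ring,
                coeff_succ_X_mul, hXQ 0 n (by omega)]
              ring
  ext n
  rw [key n h, map_zero]

/-- **Algebraic equation for Dyck meanders with catastrophes.** If `U` is the
(unique) power series with constant term `0` satisfying `U = X·(1 + U²)`, then
`M·(X² + (X² + X - 1)·U) = X·(U - 1)`. -/
theorem M_mul_eq (U : PowerSeries ℚ) (hU0 : constantCoeff U = 0)
    (hU : U = X * (1 + U ^ 2)) :
    M * (X ^ 2 + (X ^ 2 + X - 1) * U) = X * (U - 1) := by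
  have hM : M = Cgf 0 := by
    ext n; simp [M, Cgf, mCount_eq]
  have hQ1 : Cgf 1 * (1 - 2*X - X^2 + X^2*U) = (1+X)*(1 - U^1) := by
    have h := Qzero U hU0 hU 0
    unfold Q at h
    linear_combination h
  have hstar : M * (1 - 2*X - X^2 + X^2*U) = 1 - X - X*U := by
    rw [hM]
    linear_combination (1 - 2*X - X^2 + X^2*U) * E0 + X * hQ1
  have hD : (1 - 2*X - X^2 + X^2*U : PowerSeries ℚ) ≠ 0 := by
    intro hd
    have : constantCoeff (1 - 2*X - X^2 + X^2*U : PowerSeries ℚ) = 1 := by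
      simp [map_sub, map_add, map_mul, map_pow, hU0]
    rw [hd] at this
    simp at this
  have hfinal : M * (X ^ 2 + (X ^ 2 + X - 1) * U) * (1 - 2*X - X^2 + X^2*U)
      = X * (U - 1) * (1 - 2*X - X^2 + X^2*U) := by
    linear_combination (X^2 + (X^2+X-1)*U) * hstar + (2*X^2 + X - 1) * hU
  exact mul_right_cancel₀ hD hfinal
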